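/- Let i ≠ j be points of the Euclidean plane and r_i, r_j ≥ 0 with dist(i,j) ≥ r_i + r_j (the two vertex circles, possibly degenerate, have disjoint interiors). Let (O,R) and (O',R') with R, R' > 0 be two circles, each orthogonal to both vertex circles (dist(O,i)² = R² + r_i², dist(O,j)² = R² + r_j², dist(O',i)² = R'² + r_i², dist(O',j)² = R'² + r_j²), and assume (O,R) ≠ (O',R'). Then every point P lying on both circles (dist(P,O) = R and dist(P,O') = R') belongs to the closed segment [i,j]. -/

import Mathlib

open scoped RealInnerProductSpace
open Real EuclideanGeometry

noncomputable section

/-- The Euclidean plane. -/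
abbrev E2 := EuclideanSpace ℝ (Fin 2)

private lemma dist_sq_E2 (x y : E2) :
    dist x y ^ 2 = (x 0 - y 0) ^ 2 + (x 1 - y 1) ^ 2 := by
  rw [EuclideanSpace.dist_eq, Real.sq_sqrt (by positivity)]
  simp [Fin.sum_univ_two, Real.dist_eq, sq_abs]

private lemma aux_sq_inj {R R' : ℝ} (hR : 0 < R) (hR' : 0 < R') (h : R ^ 2 = R' ^ 2) :
    R = R' := by nlinarith

private lemma aux_sq_le {ri rj d : ℝ} (hri : 0 ≤ ri) (hrj : 0 ≤ rj) (h : ri + rj ≤ d) :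
    (ri + rj) ^ 2 ≤ d ^ 2 := by nlinarith

private lemma aux_A {ri rj d2 : ℝ} (hri : 0 ≤ ri) (hrj : 0 ≤ rj)
    (h : (ri + rj) ^ 2 ≤ d2) : 0 ≤ d2 + ri ^ 2 - rj ^ 2 := by nlinarith

private lemma aux_t {t d2 A r : ℝ} (hd2 : 0 < d2) (hA : 0 ≤ A)
    (hE : t * A = t ^ 2 * d2 + r ^ 2) : 0 ≤ t := by
  by_contra h
  push_neg at h
  nlinarith [mul_pos (mul_pos_of_neg_of_neg h h) hd2,
    mul_nonpos_of_nonneg_of_nonpos hA h.le, sq_nonneg r]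

theorem intersection_of_adjacent_face_circles_on_edge
    (i j O O' P : E2) (ri rj R R' : ℝ)
    (hij : i ≠ j) (hri : 0 ≤ ri) (hrj : 0 ≤ rj)
    (hdisj : ri + rj ≤ dist i j)
    (hR : 0 < R) (hR' : 0 < R')
    (hOi : dist O i ^ 2 = R ^ 2 + ri ^ 2)
    (hOj : dist O j ^ 2 = R ^ 2 + rj ^ 2)
    (hO'i : dist O' i ^ 2 = R' ^ 2 + ri ^ 2)
    (hO'j : dist O' j ^ 2 = R' ^ 2 + rj ^ 2)
    (hne : (O, R) ≠ (O', R'))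
    (hP : dist P O = R) (hP' : dist P O' = R') :
    P ∈ segment ℝ i j := by
  have h1 : (O 0 - i 0)^2 + (O 1 - i 1)^2 = R^2 + ri^2 := by rw [← dist_sq_E2]; exact hOi
  have h2 : (O 0 - j 0)^2 + (O 1 - j 1)^2 = R^2 + rj^2 := by rw [← dist_sq_E2]; exact hOj
  have h3 : (O' 0 - i 0)^2 + (O' 1 - i 1)^2 = R'^2 + ri^2 := by rw [← dist_sq_E2]; exact hO'i
  have h4 : (O' 0 - j 0)^2 + (O' 1 - j 1)^2 = R'^2 + rj^2 := by rw [← dist_sq_E2]; exact hO'j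
  have h5 : (P 0 - O 0)^2 + (P 1 - O 1)^2 = R^2 := by rw [← dist_sq_E2, hP]
  have h6 : (P 0 - O' 0)^2 + (P 1 - O' 1)^2 = R'^2 := by rw [← dist_sq_E2, hP']
  have hd2 : (0:ℝ) < (j 0 - i 0)^2 + (j 1 - i 1)^2 := by
    rcases (em (j 0 = i 0)) with h0 | h0
    · have h1' : j 1 ≠ i 1 := by
        intro h1'
        exact hij (by ext k; fin_cases k <;> simp [h0, h1'])
      have hh : j 1 - i 1 ≠ 0 := sub_ne_zero.mpr h1'
      linarith [sq_nonneg (j 0 - i 0), pow_two_pos_of_ne_zero hh]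
    · have hh : j 0 - i 0 ≠ 0 := sub_ne_zero.mpr h0
      linarith [sq_nonneg (j 1 - i 1), pow_two_pos_of_ne_zero hh]
  set d2 : ℝ := (j 0 - i 0)^2 + (j 1 - i 1)^2 with hd2def
  have hdd : dist i j ^ 2 = d2 := by rw [dist_sq_E2]; ring
  -- the centers differ in some coordinate
  have hv : O 0 ≠ O' 0 ∨ O 1 ≠ O' 1 := by
    by_contra hc
    push_neg at hc
    obtain ⟨hc0, hc1⟩ := hc
    have hsq : R ^ 2 = R' ^ 2 := by
      have h1' : (O' 0 - i 0)^2 + (O' 1 - i 1)^2 = R^2 + ri^2 := by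
        rw [← hc0, ← hc1]; exact h1
      linarith
    have hRR : R = R' := aux_sq_inj hR hR' hsq
    have hOeq : O = O' := by ext k; fin_cases k <;> simp [hc0, hc1]
    exact hne (by rw [hOeq, hRR])
  -- radical axis: both j - i and P - i orthogonal to v = O - O'
  have hA : (j 0 - i 0) * (O 0 - O' 0) + (j 1 - i 1) * (O 1 - O' 1) = 0 := by
    linear_combination (h1 - h2 - h3 + h4) / 2
  have hB : (P 0 - i 0) * (O 0 - O' 0) + (P 1 - i 1) * (O 1 - O' 1) = 0 := by
    linear_combination (h1 - h5 - h3 + h6) / 2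
  -- cross product of P - i and j - i vanishes
  have hC : (P 0 - i 0) * (j 1 - i 1) - (P 1 - i 1) * (j 0 - i 0) = 0 := by
    rcases hv with h | h
    · have hv0 : O 0 - O' 0 ≠ 0 := sub_ne_zero.mpr h
      have hz : ((P 0 - i 0) * (j 1 - i 1) - (P 1 - i 1) * (j 0 - i 0)) * (O 0 - O' 0) = 0 := by
        linear_combination (j 1 - i 1) * hB - (P 1 - i 1) * hA
      exact (mul_eq_zero.mp hz).resolve_right hv0
    · have hv1 : O 1 - O' 1 ≠ 0 := sub_ne_zero.mpr h
      have hz : ((P 0 - i 0) * (j 1 - i 1) - (P 1 - i 1) * (j 0 - i 0)) * (O 1 - O' 1) = 0 := by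
        linear_combination (P 0 - i 0) * hA - (j 0 - i 0) * hB
      exact (mul_eq_zero.mp hz).resolve_right hv1
  obtain ⟨t, hp0, hp1⟩ :
      ∃ t : ℝ, P 0 - i 0 = t * (j 0 - i 0) ∧ P 1 - i 1 = t * (j 1 - i 1) := by
    have hd2ne : d2 ≠ 0 := ne_of_gt hd2
    refine ⟨((P 0 - i 0) * (j 0 - i 0) + (P 1 - i 1) * (j 1 - i 1)) / d2, ?_, ?_⟩
    · rw [div_mul_eq_mul_div, eq_div_iff hd2ne, hd2def]
      linear_combination (j 1 - i 1) * hC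
    · rw [div_mul_eq_mul_div, eq_div_iff hd2ne, hd2def]
      linear_combination (-(j 0 - i 0)) * hC
  have e0 : P 0 = i 0 + t * (j 0 - i 0) := by linarith
  have e1 : P 1 = i 1 + t * (j 1 - i 1) := by linarith
  rw [e0, e1] at h5
  -- quadratic relations for t
  have E1 : t * (d2 + ri^2 - rj^2) = t^2 * d2 + ri^2 := by
    rw [hd2def]
    linear_combination h1 - h5 + t * (h2 - h1)
  have E2 : (1 - t) * (d2 + rj^2 - ri^2) = (1 - t)^2 * d2 + rj^2 := by
    rw [hd2def]
    linear_combination h2 - h5 + (1 - t) * (h1 - h2)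
  -- geometric inequalities
  have hij2 : (ri + rj)^2 ≤ d2 := hdd ▸ aux_sq_le hri hrj hdisj
  have hA1 : (0:ℝ) ≤ d2 + ri^2 - rj^2 := aux_A hri hrj hij2
  have hA2 : (0:ℝ) ≤ d2 + rj^2 - ri^2 := aux_A hrj hri (by rwa [add_comm rj ri])
  have ht0 : 0 ≤ t := aux_t hd2 hA1 E1
  have ht1 : t ≤ 1 := by linarith [aux_t hd2 hA2 E2]
  refine ⟨1 - t, t, by linarith, ht0, by ring, ?_⟩
  ext k
  fin_cases k
  · show (1 - t) * i 0 + t * j 0 = P 0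
    rw [e0]; ring
  · show (1 - t) * i 1 + t * j 1 = P 1
    rw [e1]; ring
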